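/- Let H be a complex Hilbert space, let {P_a}_{a=1}^c and {Q_b}_{b=1}^c be POVMs with c outputs in M_n(B(H)) whose entries commute (P_{a,ij} Q_{b,kl} = Q_{b,kl} P_{a,ij} for all a, b, i, j, k, l), and let χ ∈ H be a unit vector. Define X^{(a,b)}_{(i,j),(k,l)} = ⟨P_{a,ij} Q_{b,kl} χ, χ⟩. Then the following are equivalent: (1) there is a partition S_1 ∪ ⋯ ∪ S_ℓ of {1, …, n} such that for every r and every a ≠ b, Σ_{i,j ∈ S_r} X^{(a,b)}_{(i,j),(i,j)} = 0; (2) (1/n) Σ_{a=1}^c Σ_{i,j=1}^n X^{(a,a)}_{(i,j),(i,j)} = 1; (3) for all a ≠ b, Σ_{i,j=1}^n X^{(a,b)}_{(i,j),(i,j)} = 0. -/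

import Mathlib

open scoped ENNReal

set_option synthInstance.maxHeartbeats 1000000
set_option maxHeartbeats 1000000

noncomputable section

instance piLpCompleteSpace {ι : Type*} (p : ℝ≥0∞) (β : ι → Type*)
    [∀ i, UniformSpace (β i)] [∀ i, CompleteSpace (β i)] : CompleteSpace (PiLp p β) :=
  (PiLp.uniformEquiv p β).completeSpace_iff.2 (Pi.complete β)

/-- The isometric embedding of `E` onto the `i`-th coordinate of the
ℓ²-direct sum of `n` copies of `E`. -/
def inclPi (E : Type*) [NormedAddCommGroup E] [InnerProductSpace ℂ E]
    (n : ℕ) (i : Fin n) : E →L[ℂ] PiLp 2 (fun _ : Fin n => E) :=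
  (PiLp.continuousLinearEquiv 2 ℂ (fun _ : Fin n => E)).symm.toContinuousLinearMap.comp
    (ContinuousLinearMap.pi fun j => if j = i then ContinuousLinearMap.id ℂ E else 0)

/-- The continuous linear projection onto the `i`-th coordinate of the
ℓ²-direct sum of `n` copies of `E`. -/
def projPi (E : Type*) [NormedAddCommGroup E] [InnerProductSpace ℂ E]
    (n : ℕ) (i : Fin n) : PiLp 2 (fun _ : Fin n => E) →L[ℂ] E :=
  (ContinuousLinearMap.proj i).comp
    (PiLp.continuousLinearEquiv 2 ℂ (fun _ : Fin n => E)).toContinuousLinearMap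

/-- The operator on the ℓ²-direct sum `E^n` associated to an `n × n` matrix of bounded
operators on `E`, acting by `(T ξ) i = ∑ j, T i j (ξ j)`. -/
def matToOp {E : Type*} [NormedAddCommGroup E] [InnerProductSpace ℂ E] {n : ℕ}
    (T : Matrix (Fin n) (Fin n) (E →L[ℂ] E)) :
    PiLp 2 (fun _ : Fin n => E) →L[ℂ] PiLp 2 (fun _ : Fin n => E) :=
  ∑ i, ∑ j, (inclPi E n i).comp ((T i j).comp (projPi E n j))

open scoped InnerProductSpace NNReal
set_option linter.unusedSectionVars false

section AuxSqrt


section CStar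
variable {A : Type*} [CStarAlgebra A] [PartialOrder A] [StarOrderedRing A]

lemma mem_elemental_cfc (a : A) (g : ℂ → ℂ) [IsStarNormal a] :
    cfc g a ∈ StarAlgebra.elemental ℂ a := by
  refine cfc_cases (· ∈ StarAlgebra.elemental ℂ a) a g (zero_mem _) fun hg ha' => ?_
  rw [cfcHom_eq_of_isStarNormal]
  exact SetLike.coe_mem _

lemma commute_of_mem_elemental {a b x : A} (hab : Commute a b)
    (hsab : Commute (star a) b) (hx : x ∈ StarAlgebra.elemental ℂ a) : Commute x b := by
  have hcl : IsClosed {y : A | Commute y b} := by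
    have hc : Continuous fun y : A => y * b := continuous_id.mul continuous_const
    exact isClosed_eq hc (continuous_const.mul continuous_id)
  induction hx using StarAlgebra.elemental.induction_on with
  | self => exact hab
  | star_self => exact hsab
  | algebraMap r => exact Algebra.commutes r b
  | add u hu v hv hu' hv' => exact hu'.add_left hv'
  | mul u hu v hv hu' hv' => exact hu'.mul_left hv'
  | closure s hs hsP v hv => exact closure_minimal (fun u hu => hsP u hu) hcl hv

lemma commute_sqrt {a b : A} (ha : 0 ≤ a) (hab : Commute a b) : Commute (CFC.sqrt a) b := by
  have hsa : IsSelfAdjoint a := .of_nonneg ha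
  have : IsStarNormal a := hsa.isStarNormal
  have h1 : CFC.sqrt a = cfc (fun x : ℝ => ((NNReal.sqrt x.toNNReal : ℝ≥0) : ℝ)) a := by
    rw [CFC.sqrt_eq_cfc, cfc_nnreal_eq_real _ a ha]
  have h2 : CFC.sqrt a
      = cfc (fun z : ℂ => (((NNReal.sqrt z.re.toNNReal : ℝ≥0) : ℝ) : ℂ)) a := by
    rw [h1, cfc_real_eq_complex]
  rw [h2]
  exact commute_of_mem_elemental hab (by rwa [hsa.star_eq]) (mem_elemental_cfc a _)

end CStar

lemma exists_gram {E : Type*} [NormedAddCommGroup E] [InnerProductSpace ℂ E] [CompleteSpace E]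
    {A B : E →L[ℂ] E} (hA : A.IsPositive) (hB : B.IsPositive) (hAB : Commute A B) :
    ∃ D : E →L[ℂ] E, ∀ x y : E, ⟪x, A (B y)⟫_ℂ = ⟪D x, D y⟫_ℂ := by
  rw [← ContinuousLinearMap.nonneg_iff_isPositive] at hA hB
  set S := CFC.sqrt A with hSdef
  have hS : 0 ≤ S := CFC.sqrt_nonneg A
  have hSS : S * S = A := CFC.sqrt_mul_sqrt_self A hA
  have hSB : Commute S B := commute_sqrt hA hAB
  have hSsa : IsSelfAdjoint S := .of_nonneg hS
  have hC : 0 ≤ A * B := by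
    have h : A * B = star S * B * S := by
      rw [hSsa.star_eq, ← hSS, mul_assoc, mul_assoc, hSB.eq]
    rw [h]
    exact star_left_conjugate_nonneg hB S
  obtain ⟨D, hDD, hDsa⟩ : ∃ D : E →L[ℂ] E, D * D = A * B ∧ IsSelfAdjoint D :=
    ⟨CFC.sqrt (A * B), CFC.sqrt_mul_sqrt_self _ hC, .of_nonneg (CFC.sqrt_nonneg _)⟩
  refine ⟨D, fun x y => ?_⟩
  have h1 : A (B y) = D (D y) := by rw [show A (B y) = (A * B) y from rfl, ← hDD]; rfl
  calc ⟪x, A (B y)⟫_ℂ = ⟪x, D (D y)⟫_ℂ := by rw [h1]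
    _ = ⟪(ContinuousLinearMap.adjoint D) x, D y⟫_ℂ := by
        rw [ContinuousLinearMap.adjoint_inner_left]
    _ = ⟪D x, D y⟫_ℂ := by rw [← ContinuousLinearMap.star_eq_adjoint, hDsa.star_eq]

end AuxSqrt

section Aux

variable {E : Type*} [NormedAddCommGroup E] [InnerProductSpace ℂ E] {n : ℕ}

lemma projPi_apply (i : Fin n) (ξ : PiLp 2 (fun _ : Fin n => E)) : projPi E n i ξ = ξ i := rfl

lemma inclPi_apply (i k : Fin n) (x : E) :
    inclPi E n i x k = if k = i then x else 0 := by
  show (ContinuousLinearMap.pi fun j => if j = i then ContinuousLinearMap.id ℂ E else 0) x k = _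
  rw [ContinuousLinearMap.pi_apply]
  split <;> simp_all

lemma piLp_sum_coord {ι : Type*} (s : Finset ι) (η : ι → PiLp 2 (fun _ : Fin n => E))
    (j : Fin n) : (∑ k ∈ s, η k) j = ∑ k ∈ s, η k j := by
  have h : (∑ k ∈ s, η k) j = projPi E n j (∑ k ∈ s, η k) := rfl
  rw [h, map_sum]
  rfl

lemma matToOp_apply (T : Matrix (Fin n) (Fin n) (E →L[ℂ] E))
    (ξ : PiLp 2 (fun _ : Fin n => E)) (k : Fin n) :
    matToOp T ξ k = ∑ j, T k j (ξ j) := by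
  have h : matToOp T ξ = ∑ i, ∑ j, inclPi E n i ((T i j) (projPi E n j ξ)) := by
    simp [matToOp, ContinuousLinearMap.sum_apply]
  have h2 : matToOp T ξ k = projPi E n k (matToOp T ξ) := rfl
  rw [h2, h, map_sum]
  simp only [map_sum, projPi_apply, inclPi_apply]
  rw [Finset.sum_comm]
  refine Finset.sum_congr rfl fun j _ => ?_
  simp

/-- Pointwise (diagonal) amplification of an operator. -/
def ptwOp (T : E →L[ℂ] E) :
    PiLp 2 (fun _ : Fin n => E) →L[ℂ] PiLp 2 (fun _ : Fin n => E) :=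
  matToOp fun j j' => if j = j' then T else 0

lemma ptwOp_apply (T : E →L[ℂ] E) (ξ : PiLp 2 (fun _ : Fin n => E)) (j : Fin n) :
    ptwOp T ξ j = T (ξ j) := by
  rw [show ptwOp T ξ j = ∑ j1, (if j = j1 then T else 0) (ξ j1) from matToOp_apply _ _ _]
  have h : ∀ j1 : Fin n, (if j = j1 then T else 0) (ξ j1)
      = if j = j1 then T (ξ j1) else 0 := by
    intro j1; split <;> simp
  rw [Finset.sum_congr rfl fun j1 _ => h j1, Finset.sum_ite_eq]
  simp

lemma isPositive_iff' [CompleteSpace E] (T : E →L[ℂ] E) :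
    T.IsPositive ↔ ∀ x, ∃ r : ℝ, 0 ≤ r ∧ ⟪T x, x⟫_ℂ = (r : ℂ) := by
  rw [ContinuousLinearMap.isPositive_iff_complex]
  constructor
  · intro h x
    exact ⟨_, (h x).2, ((h x).1).symm⟩
  · intro h x
    obtain ⟨r, hr, hx⟩ := h x
    rw [hx]
    simpa using hr

lemma ptwOp_isPositive [CompleteSpace E] {T : E →L[ℂ] E} (hT : T.IsPositive) :
    (ptwOp (n := n) T).IsPositive := by
  rw [isPositive_iff'] at hT ⊢
  intro ξ
  have h : ⟪ptwOp T ξ, ξ⟫_ℂ = ∑ j, ⟪T (ξ j), ξ j⟫_ℂ := by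
    rw [PiLp.inner_apply]
    exact Finset.sum_congr rfl fun j _ => by rw [ptwOp_apply]
  choose r hr hxr using fun j => hT (ξ j)
  exact ⟨∑ j, r j, Finset.sum_nonneg fun j _ => hr j, by
    rw [h, Complex.ofReal_sum]
    exact Finset.sum_congr rfl fun j _ => hxr j⟩

/-- Amplification of a matrix of operators acting on the first index of a doubly-indexed
ℓ²-direct sum. -/
def firstAmp (P : Matrix (Fin n) (Fin n) (E →L[ℂ] E)) :
    PiLp 2 (fun _ : Fin n => PiLp 2 (fun _ : Fin n => E)) →L[ℂ]
      PiLp 2 (fun _ : Fin n => PiLp 2 (fun _ : Fin n => E)) :=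
  matToOp fun i k => ptwOp (P i k)

lemma firstAmp_apply (P : Matrix (Fin n) (Fin n) (E →L[ℂ] E))
    (ξ : PiLp 2 (fun _ : Fin n => PiLp 2 (fun _ : Fin n => E))) (i j : Fin n) :
    firstAmp P ξ i j = ∑ k, P i k (ξ k j) := by
  rw [show firstAmp P ξ i = ∑ k, ptwOp (P i k) (ξ k) from matToOp_apply _ _ _, piLp_sum_coord]
  exact Finset.sum_congr rfl fun k _ => by rw [ptwOp_apply]

lemma sndAmp_apply (Q : Matrix (Fin n) (Fin n) (E →L[ℂ] E))
    (ξ : PiLp 2 (fun _ : Fin n => PiLp 2 (fun _ : Fin n => E))) (i j : Fin n) :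
    ptwOp (matToOp Q) ξ i j = ∑ l, Q j l (ξ i l) := by
  rw [ptwOp_apply, matToOp_apply]

lemma firstAmp_isPositive [CompleteSpace E] {P : Matrix (Fin n) (Fin n) (E →L[ℂ] E)}
    (hP : (matToOp P).IsPositive) : (firstAmp P).IsPositive := by
  rw [isPositive_iff'] at hP ⊢
  intro ξ
  set col : Fin n → PiLp 2 (fun _ : Fin n => E) :=
    fun j => (WithLp.equiv 2 (∀ _ : Fin n, E)).symm (fun i => ξ i j) with hcol
  have hcolapp : ∀ j i, col j i = ξ i j := fun j i => rfl
  have h : ⟪firstAmp P ξ, ξ⟫_ℂ = ∑ j, ⟪matToOp P (col j), col j⟫_ℂ := by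
    rw [PiLp.inner_apply]
    have h1 : ∀ i, ⟪firstAmp P ξ i, ξ i⟫_ℂ = ∑ j, ⟪∑ k, P i k (ξ k j), ξ i j⟫_ℂ := by
      intro i
      rw [PiLp.inner_apply]
      exact Finset.sum_congr rfl fun j _ => by rw [firstAmp_apply]
    rw [Finset.sum_congr rfl fun i _ => h1 i, Finset.sum_comm]
    refine Finset.sum_congr rfl fun j _ => ?_
    rw [PiLp.inner_apply]
    refine Finset.sum_congr rfl fun i _ => ?_
    rw [matToOp_apply]
    simp only [hcolapp]
  choose r hr hxr using fun j => hP (col j)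
  exact ⟨∑ j, r j, Finset.sum_nonneg fun j _ => hr j, by
    rw [h, Complex.ofReal_sum]
    exact Finset.sum_congr rfl fun j _ => hxr j⟩

lemma piLp_ext {ξ η : PiLp 2 (fun _ : Fin n => PiLp 2 (fun _ : Fin n => E))}
    (h : ∀ i j, ξ i j = η i j) : ξ = η :=
  PiLp.ext fun i => PiLp.ext fun j => h i j

lemma amp_commute (P Q : Matrix (Fin n) (Fin n) (E →L[ℂ] E))
    (hcomm : ∀ i j k l, (P i j).comp (Q k l) = (Q k l).comp (P i j)) :
    Commute (firstAmp P) (ptwOp (matToOp Q)) := by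
  have key : ∀ ξ, firstAmp P (ptwOp (matToOp Q) ξ) = ptwOp (matToOp Q) (firstAmp P ξ) := by
    intro ξ
    refine piLp_ext fun i j => ?_
    rw [firstAmp_apply, sndAmp_apply]
    have h1 : ∀ k, P i k (ptwOp (matToOp Q) ξ k j) = ∑ l, P i k (Q j l (ξ k l)) := by
      intro k
      rw [sndAmp_apply, map_sum]
    have h2 : ∀ l, Q j l (firstAmp P ξ i l) = ∑ k, Q j l (P i k (ξ k l)) := by
      intro l
      rw [firstAmp_apply, map_sum]
    rw [Finset.sum_congr rfl fun k _ => h1 k, Finset.sum_congr rfl fun l _ => h2 l,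
      Finset.sum_comm]
    refine Finset.sum_congr rfl fun k _ => Finset.sum_congr rfl fun l _ => ?_
    exact DFunLike.congr_fun (hcomm i l j k) (ξ l k)
  exact ContinuousLinearMap.ext key

end Aux

section Aux2


variable {H : Type*} [NormedAddCommGroup H] [InnerProductSpace ℂ H] {n : ℕ}

/-- The diagonal vector supported on a subset `S`. -/
def vPart (χ : H) (n : ℕ) (S : Finset (Fin n)) :
    PiLp 2 (fun _ : Fin n => PiLp 2 (fun _ : Fin n => H)) :=
  (WithLp.equiv 2 _).symm fun i => (WithLp.equiv 2 _).symm
    fun j => if i = j then (if i ∈ S then χ else 0) else 0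

lemma vPart_coord (χ : H) (S : Finset (Fin n)) (i j : Fin n) :
    vPart χ n S i j = if i = j then (if i ∈ S then χ else 0) else 0 := rfl

lemma inner_vPart (P Q : Matrix (Fin n) (Fin n) (H →L[ℂ] H)) (χ : H)
    (S T : Finset (Fin n)) :
    ⟪vPart χ n S, firstAmp P (ptwOp (matToOp Q) (vPart χ n T))⟫_ℂ
      = ∑ i ∈ S, ∑ k ∈ T, ⟪χ, P i k (Q i k χ)⟫_ℂ := by
  have hB : ∀ k j, ptwOp (matToOp Q) (vPart χ n T) k j
      = if k ∈ T then Q j k χ else 0 := by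
    intro k j
    rw [sndAmp_apply]
    have h : ∀ l, Q j l (vPart χ n T k l)
        = if k = l then (if k ∈ T then Q j l χ else 0) else 0 := by
      intro l
      rw [vPart_coord]
      by_cases hkl : k = l
      · subst hkl
        by_cases hk : k ∈ T <;> simp [hk]
      · simp [hkl]
    rw [Finset.sum_congr rfl fun l _ => h l, Finset.sum_ite_eq]
    simp
  have hAB : ∀ i j, firstAmp P (ptwOp (matToOp Q) (vPart χ n T)) i j
      = ∑ k ∈ T, P i k (Q j k χ) := by
    intro i j
    rw [firstAmp_apply]
    have h : ∀ k, P i k (ptwOp (matToOp Q) (vPart χ n T) k j)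
        = if k ∈ T then P i k (Q j k χ) else 0 := by
      intro k
      rw [hB]
      by_cases hk : k ∈ T <;> simp [hk]
    rw [Finset.sum_congr rfl fun k _ => h k, Finset.sum_ite_mem]
    simp
  rw [PiLp.inner_apply]
  have h1 : ∀ i, ⟪vPart χ n S i, firstAmp P (ptwOp (matToOp Q) (vPart χ n T)) i⟫_ℂ
      = if i ∈ S then ∑ k ∈ T, ⟪χ, P i k (Q i k χ)⟫_ℂ else 0 := by
    intro i
    rw [PiLp.inner_apply]
    have h2 : ∀ j, ⟪vPart χ n S i j, firstAmp P (ptwOp (matToOp Q) (vPart χ n T)) i j⟫_ℂ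
        = if i = j then (if i ∈ S then ⟪χ, firstAmp P (ptwOp (matToOp Q) (vPart χ n T)) i j⟫_ℂ
            else 0) else 0 := by
      intro j
      rw [vPart_coord]
      by_cases hij : i = j
      · subst hij
        by_cases hi : i ∈ S <;> simp [hi]
      · simp [hij]
    rw [Finset.sum_congr rfl fun j _ => h2 j, Finset.sum_ite_eq]
    by_cases hi : i ∈ S <;> simp [hi]
    rw [hAB, inner_sum]
  rw [Finset.sum_congr rfl fun i _ => h1 i, Finset.sum_ite_mem]
  simp

lemma entry_sum [CompleteSpace H] (P : Fin c → Matrix (Fin n) (Fin n) (H →L[ℂ] H))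
    (hPsum : ∑ a, matToOp (P a) = 1) (i k : Fin n) (x : H) :
    ∑ a, P a i k x = if i = k then x else 0 := by
  have h := DFunLike.congr_fun hPsum (inclPi H n k x)
  have h2 := congrArg (fun ξ : PiLp 2 (fun _ : Fin n => H) => ξ i) h
  simp only [ContinuousLinearMap.sum_apply, ContinuousLinearMap.one_apply] at h2
  rw [piLp_sum_coord] at h2
  have h3 : ∀ a, matToOp (P a) (inclPi H n k x) i = P a i k x := by
    intro a
    rw [matToOp_apply]
    have h4 : ∀ j, P a i j (inclPi H n k x j) = if j = k then P a i j x else 0 := by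
      intro j
      rw [inclPi_apply]
      by_cases hj : j = k <;> simp [hj]
    rw [Finset.sum_congr rfl fun j _ => h4 j, Finset.sum_ite_eq']
    simp
  rw [Finset.sum_congr rfl fun a _ => h3 a] at h2
  rw [h2, inclPi_apply]

end Aux2

/-- **Characterization of synchronous correlations.**  Let `{P_a}`, `{Q_b}` be POVMs with `c`
outputs in `M_n(B(H))` with mutually commuting entries, `χ ∈ H` a unit vector, and let
`X^{(a,b)}_{(i,j),(k,l)} = ⟨P_{a,ij} Q_{b,kl} χ, χ⟩` be the associated correlation.
The following are equivalent:
(1) there is a partition `S_1 ∪ ⋯ ∪ S_ℓ` of `{1,…,n}` such that for every cell `S_r` and all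
    `a ≠ b` one has `∑_{i,j ∈ S_r} X^{(a,b)}_{(i,j),(i,j)} = 0` (i.e. `X` is synchronous);
(2) `(1/n) ∑_{a=1}^c ∑_{i,j=1}^n X^{(a,a)}_{(i,j),(i,j)} = 1`;
(3) `∑_{i,j=1}^n X^{(a,b)}_{(i,j),(i,j)} = 0` whenever `a ≠ b`. -/
theorem synchronous_tfae {H : Type*} [NormedAddCommGroup H]
    [InnerProductSpace ℂ H] [CompleteSpace H] (n c : ℕ) (hn : 1 ≤ n)
    (P Q : Fin c → Matrix (Fin n) (Fin n) (H →L[ℂ] H))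
    (hPpos : ∀ a, (matToOp (P a)).IsPositive)
    (hPsum : ∑ a, matToOp (P a) = 1)
    (hQpos : ∀ b, (matToOp (Q b)).IsPositive)
    (hQsum : ∑ b, matToOp (Q b) = 1)
    (hcomm : ∀ a b i j k l, (P a i j).comp (Q b k l) = (Q b k l).comp (P a i j))
    (χ : H) (hχ : ‖χ‖ = 1) :
    List.TFAE
      [ (∃ (ℓ : ℕ) (S : Fin ℓ → Finset (Fin n)),
          (∀ r, (S r).Nonempty) ∧
          (∀ x : Fin n, ∃! r, x ∈ S r) ∧
          (∀ r, ∀ a b : Fin c, a ≠ b →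
            ∑ i ∈ S r, ∑ j ∈ S r, (inner ℂ χ ((P a i j) ((Q b i j) χ)) : ℂ) = 0)),
        ((1 / (n : ℂ)) * ∑ a, ∑ i, ∑ j, (inner ℂ χ ((P a i j) ((Q a i j) χ)) : ℂ) = 1),
        (∀ a b : Fin c, a ≠ b →
          ∑ i, ∑ j, (inner ℂ χ ((P a i j) ((Q b i j) χ)) : ℂ) = 0) ] := by
  have hn0 : (n : ℂ) ≠ 0 := Nat.cast_ne_zero.mpr (by omega)
  have hnonempty : Nonempty (Fin n) := ⟨⟨0, by omega⟩⟩
  -- the Gram representation of the correlation sums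
  have hgram : ∀ a b : Fin c, ∃ D : PiLp 2 (fun _ : Fin n => PiLp 2 (fun _ : Fin n => H)) →L[ℂ]
      PiLp 2 (fun _ : Fin n => PiLp 2 (fun _ : Fin n => H)), ∀ S T : Finset (Fin n),
      (∑ i ∈ S, ∑ k ∈ T, (inner ℂ χ ((P a i k) ((Q b i k) χ)) : ℂ))
        = ⟪D (vPart χ n S), D (vPart χ n T)⟫_ℂ := by
    intro a b
    obtain ⟨D, hD⟩ := exists_gram (firstAmp_isPositive (hPpos a))
      (ptwOp_isPositive (hQpos b)) (amp_commute _ _ (fun i j k l => hcomm a b i j k l))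
    refine ⟨D, fun S T => ?_⟩
    rw [← hD, ← inner_vPart]
  choose D hD using hgram
  -- total sum over all outputs is n
  have hsum_all : ∑ a, ∑ b, ∑ i, ∑ k, (inner ℂ χ ((P a i k) ((Q b i k) χ)) : ℂ) = n := by
    have hik : ∀ i k : Fin n, ∑ a, ∑ b, (inner ℂ χ ((P a i k) ((Q b i k) χ)) : ℂ)
        = if i = k then 1 else 0 := by
      intro i k
      have hb : ∀ a : Fin c, ∑ b, (inner ℂ χ ((P a i k) ((Q b i k) χ)) : ℂ)
          = ⟪χ, P a i k (if i = k then χ else 0)⟫_ℂ := by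
        intro a
        rw [← inner_sum, ← map_sum, entry_sum Q hQsum]
      rw [Finset.sum_congr rfl fun a _ => hb a, ← inner_sum, entry_sum P hPsum]
      by_cases h : i = k
      · simp only [h, if_true]
        rw [inner_self_eq_norm_sq_to_K, hχ]
        norm_num
      · simp [h]
    calc ∑ a, ∑ b, ∑ i, ∑ k, (inner ℂ χ ((P a i k) ((Q b i k) χ)) : ℂ)
        = ∑ a, ∑ i, ∑ b, ∑ k, (inner ℂ χ ((P a i k) ((Q b i k) χ)) : ℂ) :=
          Finset.sum_congr rfl fun a _ => Finset.sum_comm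
      _ = ∑ a, ∑ i, ∑ k, ∑ b, (inner ℂ χ ((P a i k) ((Q b i k) χ)) : ℂ) :=
          Finset.sum_congr rfl fun a _ => Finset.sum_congr rfl fun i _ =>
            Finset.sum_comm
      _ = ∑ i, ∑ a, ∑ k, ∑ b, (inner ℂ χ ((P a i k) ((Q b i k) χ)) : ℂ) :=
          Finset.sum_comm
      _ = ∑ i, ∑ k, ∑ a, ∑ b, (inner ℂ χ ((P a i k) ((Q b i k) χ)) : ℂ) :=
          Finset.sum_congr rfl fun i _ => Finset.sum_comm
      _ = ∑ i : Fin n, (1 : ℂ) := by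
          refine Finset.sum_congr rfl fun i _ => ?_
          rw [Finset.sum_congr rfl fun k _ => hik i k, Finset.sum_ite_eq Finset.univ i fun _ => (1:ℂ)]
          simp
      _ = n := by simp
  tfae_have 3 → 1 := by
    intro h3
    refine ⟨1, fun _ => Finset.univ, fun r => Finset.univ_nonempty,
      fun x => ⟨0, Finset.mem_univ x, fun y _ => Subsingleton.elim y 0⟩,
      fun r a b hab => h3 a b hab⟩
  tfae_have 1 → 3 := by
    rintro ⟨ℓ, S, hne, huni, hzero⟩ a b hab
    have hDzero : ∀ r : Fin ℓ, D a b (vPart χ n (S r)) = 0 := by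
      intro r
      have h := (hD a b (S r) (S r)).symm
      rw [hzero r a b hab] at h
      exact inner_self_eq_zero.mp h
    set f : Fin n → Fin ℓ := fun x => (huni x).choose with hf
    have hfmem : ∀ x, x ∈ S (f x) := fun x => (huni x).choose_spec.1
    have hSfil : ∀ r, S r = Finset.univ.filter (fun x => f x = r) := by
      intro r
      ext x
      simp only [Finset.mem_filter, Finset.mem_univ, true_and]
      constructor
      · intro hx
        exact ((huni x).choose_spec.2 r hx).symm ▸ rfl
      · rintro rfl
        exact hfmem x
    have key : ∀ (g : Fin n → ℂ), ∑ i, g i = ∑ r, ∑ i ∈ S r, g i := by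
      intro g
      have h := Finset.sum_fiberwise_of_maps_to (t := Finset.univ)
        (fun i (_ : i ∈ Finset.univ) => Finset.mem_univ (f i)) g
      rw [← h]
      exact Finset.sum_congr rfl fun r _ => by rw [hSfil r]
    rw [key]
    rw [Finset.sum_congr rfl fun r _ => Finset.sum_congr rfl fun i (_ : i ∈ S r) =>
      key fun k => (inner ℂ χ ((P a i k) ((Q b i k) χ)) : ℂ)]
    rw [Finset.sum_congr rfl fun r _ => Finset.sum_comm]
    refine Finset.sum_eq_zero fun r _ => Finset.sum_eq_zero fun s _ => ?_
    rw [hD a b (S r) (S s), hDzero r, inner_zero_left]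
  tfae_have 3 → 2 := by
    intro h3
    have hdiag : ∀ a : Fin c, ∑ b, ∑ i, ∑ k, (inner ℂ χ ((P a i k) ((Q b i k) χ)) : ℂ)
        = ∑ i, ∑ k, (inner ℂ χ ((P a i k) ((Q a i k) χ)) : ℂ) := by
      intro a
      exact Finset.sum_eq_single a (fun b _ hba => h3 a b (Ne.symm hba)) (by simp)
    rw [Finset.sum_congr rfl fun a _ => hdiag a] at hsum_all
    rw [hsum_all]
    field_simp
  tfae_have 2 → 3 := by
    intro h2 a b hab
    set t : Fin c → Fin c → ℝ := fun a b => ‖D a b (vPart χ n Finset.univ)‖ ^ 2 with ht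
    have hT : ∀ a b : Fin c, ∑ i, ∑ k, (inner ℂ χ ((P a i k) ((Q b i k) χ)) : ℂ)
        = ((t a b : ℝ) : ℂ) := by
      intro a b
      rw [show (∑ i, ∑ k, (inner ℂ χ ((P a i k) ((Q b i k) χ)) : ℂ))
          = ∑ i ∈ Finset.univ, ∑ k ∈ Finset.univ, (inner ℂ χ ((P a i k) ((Q b i k) χ)) : ℂ)
          from rfl,
        hD a b Finset.univ Finset.univ, inner_self_eq_norm_sq_to_K]
      norm_cast
    have htn : ∀ a b, 0 ≤ t a b := fun a b => by positivity
    have hsum_real : ∑ a, ∑ b, t a b = n := by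
      have h := hsum_all
      rw [Finset.sum_congr rfl fun a _ => Finset.sum_congr rfl fun b _ => hT a b] at h
      exact_mod_cast h
    have hdiag_real : ∑ a : Fin c, t a a = n := by
      have h2' : ∑ a, ∑ i, ∑ k, (inner ℂ χ ((P a i k) ((Q a i k) χ)) : ℂ) = n := by
        field_simp at h2
        rw [h2]
      rw [Finset.sum_congr rfl fun a _ => hT a a] at h2'
      exact_mod_cast h2'
    have hoff : ∑ a : Fin c, ∑ b ∈ Finset.univ.erase a, t a b = 0 := by
      have hexp : ∀ a : Fin c, ∑ b, t a b = t a a + ∑ b ∈ Finset.univ.erase a, t a b :=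
        fun a => (Finset.add_sum_erase Finset.univ (t a) (Finset.mem_univ a)).symm
      have := hsum_real
      rw [Finset.sum_congr rfl fun a _ => hexp a, Finset.sum_add_distrib, hdiag_real] at this
      linarith
    have hzero : t a b = 0 := by
      have h1 := (Finset.sum_eq_zero_iff_of_nonneg
        (fun a _ => Finset.sum_nonneg fun b _ => htn a b)).mp hoff a (Finset.mem_univ a)
      exact (Finset.sum_eq_zero_iff_of_nonneg (fun b _ => htn a b)).mp h1 b
        (Finset.mem_erase.mpr ⟨Ne.symm hab, Finset.mem_univ b⟩)
    rw [hT a b, hzero]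
    norm_num
  tfae_finish
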